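/- For t ∈ ℝ define the complex number f(t) = (1 − √(1 − e^{2it}))/e^{it}, where √ denotes the principal branch of the complex square root. Then for every t ∈ ℝ, lim_{n→∞} f(t/n²)ⁿ = exp(−|t|^{1/2}·(1 − i·sgn(t))). Equivalently, the limit equals exp(−√2·(−it)^{1/2}) with the principal branch power, which is the characteristic function of the Lévy distribution (the stable law S(1/2, 1, 1, 0)). -/

import Mathlib

open Complex Filter Topology

private lemma cpow_half_real_mul {r : ℝ} (hr : 0 < r) (z : ℂ) :
    ((r : ℂ) * z) ^ ((1:ℂ)/2) = ((Real.sqrt r : ℝ) : ℂ) * z ^ ((1:ℂ)/2) := by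
  rcases eq_or_ne z 0 with rfl | hz
  · simp [Complex.zero_cpow (by norm_num : (1:ℂ)/2 ≠ 0)]
  · have hr' : (r : ℂ) ≠ 0 := by exact_mod_cast hr.ne'
    rw [Complex.cpow_def_of_ne_zero (mul_ne_zero hr' hz),
      Complex.cpow_def_of_ne_zero hz, Complex.log_ofReal_mul hr hz, add_mul, Complex.exp_add]
    congr 1
    have h1 : ((Real.log r : ℝ) : ℂ) * ((1:ℂ)/2) = ((Real.log r * (1/2) : ℝ) : ℂ) := by
      push_cast; ring
    rw [h1, ← Complex.ofReal_exp, Real.exp_mul, Real.exp_log hr, Real.sqrt_eq_rpow]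

private lemma tendsto_pow_exp {z : ℕ → ℂ} {w : ℂ}
    (h : Tendsto (fun n : ℕ => (n : ℂ) * (z n - 1)) atTop (𝓝 w)) :
    Tendsto (fun n => z n ^ n) atTop (𝓝 (Complex.exp w)) := by
  have hinv : Tendsto (fun n : ℕ => ((n : ℂ))⁻¹) atTop (𝓝 0) := by
    have := tendsto_inv_atTop_nhds_zero_nat (𝕜 := ℝ)
    have h2 := (Complex.continuous_ofReal.tendsto 0).comp this
    simpa [Function.comp_def] using h2
  have hz1 : Tendsto (fun n => z n - 1) atTop (𝓝 0) := by
    have hmul := h.mul hinv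
    rw [mul_zero] at hmul
    refine hmul.congr' ?_
    filter_upwards [eventually_ge_atTop 1] with n hn
    have hn' : (n : ℂ) ≠ 0 := Nat.cast_ne_zero.2 (by omega)
    field_simp
  set φ : ℂ → ℂ := fun u => if u = 0 then 1 else Complex.log (1 + u) / u with hφdef
  have hφ : Tendsto φ (𝓝 0) (𝓝 1) := by
    have hd : HasDerivAt (fun u : ℂ => Complex.log (1 + u)) 1 0 := by
      have hlog : HasDerivAt Complex.log ((1 : ℂ) + 0)⁻¹ ((1 : ℂ) + 0) :=
        Complex.hasDerivAt_log (by norm_num [Complex.mem_slitPlane_iff])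
      have hin : HasDerivAt (fun u : ℂ => (1 : ℂ) + u) 1 0 := (hasDerivAt_id 0).const_add 1
      simpa [Function.comp_def] using hlog.comp 0 hin
    have hs := hasDerivAt_iff_tendsto_slope.mp hd
    have hpunct : Tendsto φ (𝓝[≠] (0:ℂ)) (𝓝 1) := by
      refine hs.congr' ?_
      filter_upwards [self_mem_nhdsWithin] with u hu
      simp only [Set.mem_compl_iff, Set.mem_singleton_iff] at hu
      simp [slope_def_field, φ, hu, Complex.log_one]
    rw [← nhdsNE_sup_pure (0:ℂ), tendsto_sup]
    exact ⟨hpunct, by simpa [φ] using tendsto_pure_nhds φ 0⟩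
  have hL : Tendsto (fun n : ℕ => (n : ℂ) * Complex.log (z n)) atTop (𝓝 w) := by
    have hmul := h.mul (hφ.comp hz1)
    rw [mul_one] at hmul
    refine hmul.congr (fun n => ?_)
    rcases eq_or_ne (z n) 1 with h1 | h1
    · simp [h1, φ]
    · have hne : z n - 1 ≠ 0 := sub_ne_zero.2 h1
      simp only [Function.comp, φ, if_neg hne]
      rw [add_sub_cancel]
      field_simp
  have hznz : ∀ᶠ n in atTop, z n ≠ 0 := by
    have hz : Tendsto z atTop (𝓝 1) := by
      have := hz1.add_const 1
      simpa using this
    exact hz.eventually_ne one_ne_zero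
  have hfinal := (Complex.continuous_exp.tendsto w).comp hL
  refine hfinal.congr' ?_
  filter_upwards [hznz] with n hn
  simp only [Function.comp]
  rw [Complex.exp_nat_mul, Complex.exp_log hn]

private lemma half_cpow_neg_I :
    (-Complex.I) ^ ((1:ℂ)/2) = ((Real.sqrt 2 / 2 : ℝ) : ℂ) * (1 - Complex.I) := by
  rw [Complex.cpow_def_of_ne_zero (by simp : (-Complex.I) ≠ 0), Complex.log_neg_I]
  have h : -(↑Real.pi / 2) * Complex.I * ((1:ℂ)/2) = (((-(Real.pi/4)) : ℝ) : ℂ) * Complex.I := by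
    push_cast; ring
  rw [h, Complex.exp_mul_I, ← Complex.ofReal_cos, ← Complex.ofReal_sin, Real.cos_neg,
    Real.sin_neg, Real.cos_pi_div_four, Real.sin_pi_div_four]
  push_cast; ring

private lemma half_cpow_I :
    Complex.I ^ ((1:ℂ)/2) = ((Real.sqrt 2 / 2 : ℝ) : ℂ) * (1 + Complex.I) := by
  rw [Complex.cpow_def_of_ne_zero Complex.I_ne_zero, Complex.log_I]
  have h : (↑Real.pi / 2) * Complex.I * ((1:ℂ)/2) = (((Real.pi/4) : ℝ) : ℂ) * Complex.I := by
    push_cast; ring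
  rw [h, Complex.exp_mul_I, ← Complex.ofReal_cos, ← Complex.ofReal_sin,
    Real.cos_pi_div_four, Real.sin_pi_div_four]
  push_cast; ring

private lemma key_ident (t : ℝ) :
    ((Real.sqrt 2 : ℝ) : ℂ) * (-(Complex.I * (t : ℂ))) ^ ((1:ℂ)/2)
      = ((|t| ^ ((1:ℝ)/2) : ℝ) : ℂ) * (1 - Complex.I * ((Real.sign t : ℝ) : ℂ)) := by
  have h2 : (Real.sqrt 2) * (Real.sqrt 2) = 2 := Real.mul_self_sqrt (by norm_num)
  have hc : ((Real.sqrt 2 : ℝ) : ℂ) * ((Real.sqrt 2 : ℝ) : ℂ) = 2 := by exact_mod_cast h2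
  rcases lt_trichotomy t 0 with ht | rfl | ht
  · have habs : (0:ℝ) < |t| := abs_pos.2 ht.ne
    have h1 : (-(Complex.I * (t : ℂ))) = ((|t| : ℝ) : ℂ) * Complex.I := by
      rw [abs_of_neg ht]; push_cast; ring
    rw [h1, cpow_half_real_mul habs, half_cpow_I, Real.sign_of_neg ht, ← Real.sqrt_eq_rpow]
    push_cast
    linear_combination (((Real.sqrt |t| : ℝ) : ℂ) * (1 + Complex.I) / 2) * hc
  · norm_num [Real.sign_zero, Real.zero_rpow, Complex.zero_cpow (show (1:ℂ)/2 ≠ 0 by norm_num)]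
  · have habs : (0:ℝ) < |t| := abs_pos.2 ht.ne'
    have h1 : (-(Complex.I * (t : ℂ))) = ((|t| : ℝ) : ℂ) * (-Complex.I) := by
      rw [abs_of_pos ht]; push_cast; ring
    rw [h1, cpow_half_real_mul habs, half_cpow_neg_I, Real.sign_of_pos ht, ← Real.sqrt_eq_rpow]
    push_cast
    linear_combination (((Real.sqrt |t| : ℝ) : ℂ) * (1 - Complex.I) / 2) * hc

private lemma tendsto_inv_nat_complex : Tendsto (fun n : ℕ => ((n : ℂ))⁻¹) atTop (𝓝 0) := by
  have h2 := (Complex.continuous_ofReal.tendsto 0).comp tendsto_inv_atTop_nhds_zero_nat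
  simpa [Function.comp_def] using h2

private lemma tendsto_s_zero (t : ℝ) :
    Tendsto (fun n : ℕ => ((t / (n : ℝ) ^ 2 : ℝ) : ℂ)) atTop (𝓝 0) := by
  have h : Tendsto (fun n : ℕ => t / (n : ℝ) ^ 2) atTop (𝓝 0) :=
    Tendsto.div_atTop tendsto_const_nhds
      ((tendsto_pow_atTop two_ne_zero).comp tendsto_natCast_atTop_atTop)
  have := (Complex.continuous_ofReal.tendsto 0).comp h
  simpa [Function.comp_def] using this

private lemma tendsto_sq_mul (t : ℝ) (ht : t ≠ 0) (c : ℂ) :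
    Tendsto (fun n : ℕ => ((n : ℂ)) ^ 2 * (1 - Complex.exp (c * ((t / (n : ℝ) ^ 2 : ℝ) : ℂ))))
      atTop (𝓝 (-((t : ℂ) * c))) := by
  have hd : HasDerivAt (fun v : ℂ => Complex.exp (c * v)) c 0 := by
    have h1 : HasDerivAt (fun v : ℂ => c * v) c 0 := by
      simpa using (hasDerivAt_id (0:ℂ)).const_mul c
    simpa [Function.comp_def] using (Complex.hasDerivAt_exp (c * 0)).comp 0 h1
  have hs := hasDerivAt_iff_tendsto_slope.mp hd
  have hu : Tendsto (fun n : ℕ => ((t / (n : ℝ) ^ 2 : ℝ) : ℂ)) atTop (𝓝[≠] 0) := by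
    rw [tendsto_nhdsWithin_iff]
    refine ⟨tendsto_s_zero t, ?_⟩
    filter_upwards [eventually_ge_atTop 1] with n hn
    have hn' : ((n : ℝ)) ^ 2 ≠ 0 := by positivity
    simp only [Set.mem_compl_iff, Set.mem_singleton_iff, Complex.ofReal_eq_zero]
    exact div_ne_zero ht hn'
  have hcomp := (hs.comp hu).const_mul (-(t : ℂ))
  rw [show -(t:ℂ) * c = -((t:ℂ) * c) from by ring] at hcomp
  refine Tendsto.congr' ?_ hcomp
  filter_upwards [eventually_ge_atTop 1] with n hn
  have hn' : ((n : ℂ)) ^ 2 ≠ 0 :=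
    pow_ne_zero _ (Nat.cast_ne_zero.2 (by omega))
  have ht' : (t : ℂ) ≠ 0 := by exact_mod_cast ht
  have hn0 : (n : ℂ) ≠ 0 := Nat.cast_ne_zero.2 (by omega)
  have hu' : ((t / (n : ℝ) ^ 2 : ℝ) : ℂ) = (t : ℂ) / ((n : ℂ)) ^ 2 := by push_cast; ring
  simp only [Function.comp, slope_def_field, hu']
  rw [mul_zero, Complex.exp_zero]
  field_simp
  ring_nf
  linear_combination (1 - Complex.exp ((t : ℂ) * c * ((n : ℂ))⁻¹ ^ 2)) * mul_inv_cancel₀ ht'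

open Complex Filter in
/-- The discrete stable distribution in the second sense with characteristic
function `f(t) = (1 - √(1 - e^{2it}))/e^{it}` belongs to the domain of normal
attraction of the Lévy distribution `S(1/2,1,1,0)`:
`f(t/n²)ⁿ → exp(-|t|^{1/2}(1 - i sgn t))`, and this limit equals
`exp(-√2 (-it)^{1/2})` (principal branch powers). -/
theorem levy_domain_of_attraction (t : ℝ) :
    Filter.Tendsto
      (fun n : ℕ =>
        ((1 - (1 - Complex.exp (2 * Complex.I * ((t / (n : ℝ) ^ 2 : ℝ) : ℂ))) ^ ((1 : ℂ) / 2)) /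
            Complex.exp (Complex.I * ((t / (n : ℝ) ^ 2 : ℝ) : ℂ))) ^ n)
      Filter.atTop
      (nhds (Complex.exp (-((|t| ^ ((1 : ℝ) / 2) : ℝ) : ℂ) * (1 - Complex.I * (Real.sign t : ℝ))))) ∧
    Complex.exp (-((Real.sqrt 2 : ℝ) : ℂ) * (-(Complex.I * (t : ℂ))) ^ ((1 : ℂ) / 2))
      = Complex.exp (-((|t| ^ ((1 : ℝ) / 2) : ℝ) : ℂ) * (1 - Complex.I * (Real.sign t : ℝ))) := by
  have hid : Complex.exp (-((Real.sqrt 2 : ℝ) : ℂ) * (-(Complex.I * (t : ℂ))) ^ ((1 : ℂ) / 2))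
      = Complex.exp (-((|t| ^ ((1 : ℝ) / 2) : ℝ) : ℂ) * (1 - Complex.I * (Real.sign t : ℝ))) := by
    congr 1
    rw [neg_mul, key_ident t, neg_mul]
  refine ⟨?_, hid⟩
  by_cases ht : t = 0
  · subst ht
    simp only [zero_div, Complex.ofReal_zero, mul_zero, Complex.exp_zero, sub_self,
      Complex.zero_cpow (show (1:ℂ)/2 ≠ 0 by norm_num), sub_zero, div_one, one_pow,
      abs_zero, Real.zero_rpow (show (1:ℝ)/2 ≠ 0 by norm_num), Real.sign_zero]
    norm_num
  · -- main case
    have h1 : Tendsto (fun n : ℕ => ((n : ℂ)) ^ 2 *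
        (1 - Complex.exp (2 * Complex.I * ((t / (n : ℝ) ^ 2 : ℝ) : ℂ)))) atTop
        (𝓝 (-(2 * Complex.I * (t : ℂ)))) := by
      have := tendsto_sq_mul t ht (2 * Complex.I)
      rw [show -((t:ℂ) * (2 * Complex.I)) = -(2 * Complex.I * (t:ℂ)) from by ring] at this
      exact this
    have him : (-(2 * Complex.I * (t : ℂ))).im ≠ 0 := by
      simp [Complex.mul_im, ht]
    have h4 : Tendsto (fun n : ℕ => (n : ℂ) *
        (1 - Complex.exp (2 * Complex.I * ((t / (n : ℝ) ^ 2 : ℝ) : ℂ))) ^ ((1:ℂ)/2)) atTop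
        (𝓝 ((-(2 * Complex.I * (t : ℂ))) ^ ((1:ℂ)/2))) := by
      have hcont : ContinuousAt (fun z : ℂ => z ^ ((1:ℂ)/2)) (-(2 * Complex.I * (t : ℂ))) :=
        continuousAt_cpow_const (Complex.mem_slitPlane_iff.mpr (Or.inr him))
      have := hcont.tendsto.comp h1
      refine this.congr' ?_
      filter_upwards [eventually_ge_atTop 1] with n hn
      have hpos : (0:ℝ) < ((n:ℝ))^2 := by positivity
      have hcast : ((n : ℂ)) ^ 2 = ((((n:ℝ))^2 : ℝ) : ℂ) := by push_cast; ring
      simp only [Function.comp, hcast]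
      rw [cpow_half_real_mul hpos, Real.sqrt_sq (Nat.cast_nonneg n)]
      norm_cast
    have h2 : Tendsto (fun n : ℕ => (n : ℂ) *
        (1 - Complex.exp (Complex.I * ((t / (n : ℝ) ^ 2 : ℝ) : ℂ)))) atTop (𝓝 0) := by
      have hI := tendsto_sq_mul t ht Complex.I
      have := tendsto_inv_nat_complex.mul hI
      rw [zero_mul] at this
      refine this.congr' ?_
      filter_upwards [eventually_ge_atTop 1] with n hn
      have hn' : (n : ℂ) ≠ 0 := Nat.cast_ne_zero.2 (by omega)
      field_simp
    have h3 : Tendsto (fun n : ℕ =>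
        Complex.exp (Complex.I * ((t / (n : ℝ) ^ 2 : ℝ) : ℂ))) atTop (𝓝 1) := by
      have harg : Tendsto (fun n : ℕ => Complex.I * ((t / (n : ℝ) ^ 2 : ℝ) : ℂ)) atTop
          (𝓝 (Complex.I * 0)) := tendsto_const_nhds.mul (tendsto_s_zero t)
      have := (Complex.continuous_exp.tendsto _).comp harg
      simpa [Function.comp_def] using this
    have hmain : Tendsto (fun n : ℕ => (n : ℂ) *
        ((1 - (1 - Complex.exp (2 * Complex.I * ((t / (n : ℝ) ^ 2 : ℝ) : ℂ))) ^ ((1 : ℂ) / 2)) /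
            Complex.exp (Complex.I * ((t / (n : ℝ) ^ 2 : ℝ) : ℂ)) - 1)) atTop
        (𝓝 (-((-(2 * Complex.I * (t : ℂ))) ^ ((1:ℂ)/2)))) := by
      have := (h2.sub h4).div h3 one_ne_zero
      rw [show ((0:ℂ) - (-(2 * Complex.I * (t : ℂ))) ^ ((1:ℂ)/2)) / 1
          = -((-(2 * Complex.I * (t : ℂ))) ^ ((1:ℂ)/2)) from by ring] at this
      refine this.congr (fun n => ?_)
      have he := Complex.exp_ne_zero (Complex.I * ((t / (n : ℝ) ^ 2 : ℝ) : ℂ))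
      rw [Pi.div_apply]
      field_simp
      ring
    have hfin := tendsto_pow_exp hmain
    have hw : Complex.exp (-((-(2 * Complex.I * (t : ℂ))) ^ ((1:ℂ)/2)))
        = Complex.exp (-((|t| ^ ((1 : ℝ) / 2) : ℝ) : ℂ) * (1 - Complex.I * (Real.sign t : ℝ))) := by
      rw [show -(2 * Complex.I * (t : ℂ)) = (((2:ℝ)) : ℂ) * (-(Complex.I * (t:ℂ))) from by
        push_cast; ring, cpow_half_real_mul (by norm_num : (0:ℝ) < 2)]
      congr 1
      rw [neg_mul, key_ident t]
    rw [← hw]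
    exact hfin
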